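/- Let γ₁ and γ₂ be almost surely positive random variables on a probability space such that log(1+γ₁), log(1+γ₂), log γ₁ and log γ₂ are all integrable. Then E[ log( (1+γ₁)(1+γ₂) / (1+γ₁+γ₂) ) ] ≤ E[ log(1+γ₁) ] + E[ log(1+γ₂) ] − log( 1 + e^{E[log γ₁]} + e^{E[log γ₂]} ). Equivalently, since 1 + γ₁γ₂/(γ₁+γ₂+1) = (1+γ₁)(1+γ₂)/(1+γ₁+γ₂), the ergodic capacity (1/2)E[log₂(1 + γ₁γ₂/(γ₁+γ₂+1))] of a dual-hop amplify-and-forward link is upper bounded by (1/2)[E log₂(1+γ₁) + E log₂(1+γ₂) − log₂(1 + e^{E ln γ₁} + e^{E ln γ₂})]. -/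

import Mathlib

open MeasureTheory ProbabilityTheory

lemma amgm3_support (x y A B : ℝ) (hx : 0 < x) (hy : 0 < y) :
    Real.log (1 + Real.exp A + Real.exp B)
      + Real.exp A / (1 + Real.exp A + Real.exp B) * (Real.log x - A)
      + Real.exp B / (1 + Real.exp A + Real.exp B) * (Real.log y - B)
      ≤ Real.log (1 + x + y) := by
  set S := 1 + Real.exp A + Real.exp B with hSdef
  have hS : 0 < S := by positivity
  have hA := Real.exp_pos A
  have hB := Real.exp_pos B
  have key : S ^ (1/S) * (S * (x / Real.exp A)) ^ (Real.exp A / S)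
      * (S * (y / Real.exp B)) ^ (Real.exp B / S) ≤ 1 + x + y := by
    have h := Real.geom_mean_le_arith_mean3_weighted
      (w₁ := 1/S) (w₂ := Real.exp A / S) (w₃ := Real.exp B / S)
      (p₁ := S) (p₂ := S * (x / Real.exp A)) (p₃ := S * (y / Real.exp B))
      (by positivity) (by positivity) (by positivity) (by positivity)
      (by positivity) (by positivity) (by field_simp; exact hSdef.symm)
    calc S ^ (1/S) * (S * (x / Real.exp A)) ^ (Real.exp A / S)
        * (S * (y / Real.exp B)) ^ (Real.exp B / S)
        ≤ 1/S * S + Real.exp A / S * (S * (x / Real.exp A))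
          + Real.exp B / S * (S * (y / Real.exp B)) := h
      _ = 1 + x + y := by field_simp
  have hlog := Real.log_le_log (by positivity) key
  rw [Real.log_mul (by positivity) (by positivity),
    Real.log_mul (by positivity) (by positivity),
    Real.log_rpow hS, Real.log_rpow (by positivity), Real.log_rpow (by positivity),
    Real.log_mul hS.ne' (by positivity), Real.log_mul hS.ne' (by positivity),
    Real.log_div hx.ne' hA.ne', Real.log_div hy.ne' hB.ne',
    Real.log_exp, Real.log_exp] at hlog
  have hsum : 1/S + Real.exp A/S + Real.exp B/S = 1 := by field_simp; exact hSdef.symm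
  have heq : 1/S*Real.log S + Real.exp A/S*(Real.log S + (Real.log x - A))
      + Real.exp B/S*(Real.log S + (Real.log y - B))
      = Real.log S + Real.exp A/S*(Real.log x - A) + Real.exp B/S*(Real.log y - B) := by
    linear_combination Real.log S * hsum
  linarith

/-- General ergodic-capacity upper bound for a dual-hop amplify-and-forward link
(the bound underlying Theorems 3, 6, 9 and 12 of the paper): if `γ₁, γ₂` are a.s. positive
random variables with `log(1+γ₁), log(1+γ₂), log γ₁, log γ₂` integrable, then
`E[log((1+γ₁)(1+γ₂)/(1+γ₁+γ₂))] ≤ E[log(1+γ₁)] + E[log(1+γ₂)]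
  − log(1 + e^{E[log γ₁]} + e^{E[log γ₂]})`;
equivalently, since `1 + γ₁γ₂/(γ₁+γ₂+1) = (1+γ₁)(1+γ₂)/(1+γ₁+γ₂)`, the ergodic capacity
`(1/2)E[log₂(1 + γ₁γ₂/(γ₁+γ₂+1))]` is upper bounded by
`(1/2)(E[log₂(1+γ₁)] + E[log₂(1+γ₂)] − log₂(1 + e^{E[ln γ₁]} + e^{E[ln γ₂]}))`. -/
theorem ergodic_capacity_upper_bound
    {Ω : Type*} [MeasureSpace Ω] [IsProbabilityMeasure (ℙ : Measure Ω)]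
    (γ₁ γ₂ : Ω → ℝ)
    (hpos₁ : ∀ᵐ ω ∂ℙ, 0 < γ₁ ω) (hpos₂ : ∀ᵐ ω ∂ℙ, 0 < γ₂ ω)
    (hint₁ : Integrable (fun ω => Real.log (1 + γ₁ ω)) ℙ)
    (hint₂ : Integrable (fun ω => Real.log (1 + γ₂ ω)) ℙ)
    (hlog₁ : Integrable (fun ω => Real.log (γ₁ ω)) ℙ)
    (hlog₂ : Integrable (fun ω => Real.log (γ₂ ω)) ℙ) :
    (∫ ω, Real.log ((1 + γ₁ ω) * (1 + γ₂ ω) / (1 + γ₁ ω + γ₂ ω)) ≤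
      (∫ ω, Real.log (1 + γ₁ ω)) + (∫ ω, Real.log (1 + γ₂ ω)) -
        Real.log (1 + Real.exp (∫ ω, Real.log (γ₁ ω)) +
          Real.exp (∫ ω, Real.log (γ₂ ω)))) ∧
    ((1 / 2) * ∫ ω, Real.logb 2 (1 + γ₁ ω * γ₂ ω / (γ₁ ω + γ₂ ω + 1)) ≤
      (1 / 2) * ((∫ ω, Real.logb 2 (1 + γ₁ ω)) + (∫ ω, Real.logb 2 (1 + γ₂ ω)) -
        Real.logb 2 (1 + Real.exp (∫ ω, Real.log (γ₁ ω)) +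
          Real.exp (∫ ω, Real.log (γ₂ ω))))) := by
  -- measurability of γ₁, γ₂
  have hm₁ : AEStronglyMeasurable γ₁ ℙ := by
    have h := hint₁.aestronglyMeasurable
    have he : γ₁ =ᵐ[ℙ] fun ω => Real.exp (Real.log (1 + γ₁ ω)) - 1 := by
      filter_upwards [hpos₁] with ω hω
      rw [Real.exp_log (by linarith)]; ring
    exact ((Real.continuous_exp.comp_aestronglyMeasurable h).sub
      aestronglyMeasurable_const).congr he.symm
  have hm₂ : AEStronglyMeasurable γ₂ ℙ := by
    have h := hint₂.aestronglyMeasurable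
    have he : γ₂ =ᵐ[ℙ] fun ω => Real.exp (Real.log (1 + γ₂ ω)) - 1 := by
      filter_upwards [hpos₂] with ω hω
      rw [Real.exp_log (by linarith)]; ring
    exact ((Real.continuous_exp.comp_aestronglyMeasurable h).sub
      aestronglyMeasurable_const).congr he.symm
  have hg_meas : AEStronglyMeasurable (fun ω => Real.log (1 + γ₁ ω + γ₂ ω)) ℙ :=
    (Real.measurable_log.comp_aemeasurable
      ((aemeasurable_const.add hm₁.aemeasurable).add hm₂.aemeasurable)).aestronglyMeasurable
  have hg_int : Integrable (fun ω => Real.log (1 + γ₁ ω + γ₂ ω)) ℙ := by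
    apply (hint₁.add hint₂).mono hg_meas
    filter_upwards [hpos₁, hpos₂] with ω h1 h2
    have h₁ : 0 ≤ Real.log (1 + γ₁ ω + γ₂ ω) := Real.log_nonneg (by linarith)
    rw [Real.norm_eq_abs, Real.norm_eq_abs, abs_of_nonneg h₁]
    have hle : Real.log (1 + γ₁ ω + γ₂ ω) ≤ Real.log (1 + γ₁ ω) + Real.log (1 + γ₂ ω) := by
      rw [← Real.log_mul (by positivity) (by positivity)]
      exact Real.log_le_log (by linarith) (by nlinarith)
    exact hle.trans (le_abs_self _)
  set a := ∫ ω, Real.log (γ₁ ω) with ha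
  set b := ∫ ω, Real.log (γ₂ ω) with hb
  have hS : (0:ℝ) < 1 + Real.exp a + Real.exp b := by positivity
  -- Jensen via supporting plane
  have hlb : Real.log (1 + Real.exp a + Real.exp b) ≤ ∫ ω, Real.log (1 + γ₁ ω + γ₂ ω) := by
    have hd₁ : Integrable (fun ω => Real.log (γ₁ ω) - a) ℙ := hlog₁.sub (integrable_const a)
    have hd₂ : Integrable (fun ω => Real.log (γ₂ ω) - b) ℙ := hlog₂.sub (integrable_const b)
    have hc₁ : Integrable (fun ω =>
        Real.exp a / (1 + Real.exp a + Real.exp b) * (Real.log (γ₁ ω) - a)) ℙ := hd₁.const_mul _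
    have hc₂ : Integrable (fun ω =>
        Real.exp b / (1 + Real.exp a + Real.exp b) * (Real.log (γ₂ ω) - b)) ℙ := hd₂.const_mul _
    have hs : Integrable (fun ω =>
        Real.exp a / (1 + Real.exp a + Real.exp b) * (Real.log (γ₁ ω) - a)
        + Real.exp b / (1 + Real.exp a + Real.exp b) * (Real.log (γ₂ ω) - b)) ℙ := hc₁.add hc₂
    have hint_rhs : Integrable (fun ω => Real.log (1 + Real.exp a + Real.exp b)
        + (Real.exp a / (1 + Real.exp a + Real.exp b) * (Real.log (γ₁ ω) - a)
        + Real.exp b / (1 + Real.exp a + Real.exp b) * (Real.log (γ₂ ω) - b))) ℙ :=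
      (integrable_const _).add hs
    have hmono := integral_mono_ae hint_rhs hg_int (by
      filter_upwards [hpos₁, hpos₂] with ω h1 h2
      have := amgm3_support (γ₁ ω) (γ₂ ω) a b h1 h2
      linarith)
    rw [integral_add (integrable_const _) hs, integral_add hc₁ hc₂,
      integral_const_mul, integral_const_mul,
      integral_sub hlog₁ (integrable_const a), integral_sub hlog₂ (integrable_const b),
      integral_const, integral_const] at hmono
    simp only [measure_univ, ENNReal.toReal_one, one_smul, ← ha, ← hb, sub_self,
      mul_zero, add_zero] at hmono
    simpa using hmono
  have key1 : ∫ ω, Real.log ((1 + γ₁ ω) * (1 + γ₂ ω) / (1 + γ₁ ω + γ₂ ω)) ≤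
      (∫ ω, Real.log (1 + γ₁ ω)) + (∫ ω, Real.log (1 + γ₂ ω)) -
        Real.log (1 + Real.exp a + Real.exp b) := by
    have hcongr : (fun ω => Real.log ((1 + γ₁ ω) * (1 + γ₂ ω) / (1 + γ₁ ω + γ₂ ω))) =ᵐ[ℙ]
        fun ω => Real.log (1 + γ₁ ω) + Real.log (1 + γ₂ ω) - Real.log (1 + γ₁ ω + γ₂ ω) := by
      filter_upwards [hpos₁, hpos₂] with ω h1 h2
      rw [Real.log_div (by positivity) (by positivity),
        Real.log_mul (by positivity) (by positivity)]
    have hsum12 : Integrable (fun ω => Real.log (1 + γ₁ ω) + Real.log (1 + γ₂ ω)) ℙ :=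
      hint₁.add hint₂
    rw [integral_congr_ae hcongr, integral_sub hsum12 hg_int, integral_add hint₁ hint₂]
    linarith
  refine ⟨key1, ?_⟩
  have hlog2 : (0:ℝ) < Real.log 2 := Real.log_pos (by norm_num)
  have hcongr2 : (fun ω => Real.logb 2 (1 + γ₁ ω * γ₂ ω / (γ₁ ω + γ₂ ω + 1))) =ᵐ[ℙ]
      fun ω => Real.log ((1 + γ₁ ω) * (1 + γ₂ ω) / (1 + γ₁ ω + γ₂ ω)) / Real.log 2 := by
    filter_upwards [hpos₁, hpos₂] with ω h1 h2
    have heq : 1 + γ₁ ω * γ₂ ω / (γ₁ ω + γ₂ ω + 1) =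
        (1 + γ₁ ω) * (1 + γ₂ ω) / (1 + γ₁ ω + γ₂ ω) := by
      field_simp; ring
    rw [Real.logb, heq]
  rw [integral_congr_ae hcongr2]
  simp only [Real.logb, integral_div]
  rw [← add_div, ← sub_div]
  apply mul_le_mul_of_nonneg_left _ (by norm_num : (0:ℝ) ≤ 1/2)
  exact (div_le_div_iff_of_pos_right hlog2).mpr key1
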